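/- Under Oja's update rule, if additionally η ≤ 0.1 / max_{i∈[n]} ‖y_i‖₂², then for every i ∈ {1,…,n}, log(‖v_i‖₂² / ‖v_{i−1}‖₂²) ≥ η · ⟨y_i, v̂_{i−1}⟩². -/

import Mathlib

open RealInnerProductSpace

lemma oja_expand {d : ℕ} (y w : EuclideanSpace ℝ (Fin d)) (η : ℝ) :
    ‖w + (η * ⟪y, w⟫) • y‖ ^ 2
      = ‖w‖ ^ 2 + 2 * η * ⟪y, w⟫ ^ 2 + η ^ 2 * ⟪y, w⟫ ^ 2 * ‖y‖ ^ 2 := by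
  rw [norm_add_sq_real, real_inner_smul_right, norm_smul, real_inner_comm w y]
  simp [mul_pow, abs_mul_abs_self]
  ring

lemma log_one_add_ge (x : ℝ) (hx : 0 ≤ x) : x / (1 + x) ≤ Real.log (1 + x) := by
  have h1 : (0:ℝ) < 1 + x := by linarith
  have := Real.log_le_sub_one_of_pos (show (0:ℝ) < (1 + x)⁻¹ by positivity)
  rw [Real.log_inv] at this
  have h2 : 1 - (1 + x)⁻¹ = x / (1 + x) := by field_simp; ring
  rw [← h2]
  linarith

theorem stmt_6 {n d : ℕ} (hn : 1 ≤ n) (hd : 1 ≤ d)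
    (y : ℕ → EuclideanSpace ℝ (Fin d)) (η : ℝ) (hη : 0 < η)
    (hη' : η ≤ 0.1 / ((Finset.Icc 1 n).sup' (Finset.nonempty_Icc.mpr hn)
      fun i => ‖y i‖ ^ 2))
    (v : ℕ → EuclideanSpace ℝ (Fin d)) (hv0 : v 0 ≠ 0)
    (hv : ∀ i, 1 ≤ i → i ≤ n → v i = v (i - 1) + (η * ⟪y i, v (i - 1)⟫) • y i)
    (i : ℕ) (hi : 1 ≤ i) (hin : i ≤ n) :
    η * ⟪y i, ‖v (i - 1)‖⁻¹ • v (i - 1)⟫ ^ 2 ≤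
      Real.log (‖v i‖ ^ 2 / ‖v (i - 1)‖ ^ 2) := by
  set M := ((Finset.Icc 1 n).sup' (Finset.nonempty_Icc.mpr hn) fun i => ‖y i‖ ^ 2) with hM
  have hiIcc : i ∈ Finset.Icc 1 n := Finset.mem_Icc.mpr ⟨hi, hin⟩
  have hMy : ‖y i‖ ^ 2 ≤ M := Finset.le_sup' (fun i => ‖y i‖ ^ 2) hiIcc
  have hM0 : 0 < M := by
    rcases lt_or_ge 0 M with h | h
    · exact h
    · exfalso
      have : (0.1 : ℝ) / M ≤ 0 := div_nonpos_of_nonneg_of_nonpos (by norm_num) h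
      linarith
  have hηM : η * M ≤ 0.1 := by
    rw [le_div_iff₀ hM0] at hη'; linarith
  -- norms nondecreasing
  have hmono : ∀ j, j ≤ n → ‖v 0‖ ^ 2 ≤ ‖v j‖ ^ 2 := by
    intro j
    induction j with
    | zero => intro _; exact le_refl _
    | succ k ih =>
      intro hk
      have hk' : k ≤ n := Nat.le_of_succ_le hk
      have := hv (k + 1) (Nat.le_add_left 1 k) hk
      simp only [Nat.add_sub_cancel] at this
      rw [this, oja_expand]
      have h1 : 0 ≤ 2 * η * ⟪y (k+1), v k⟫ ^ 2 := by positivity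
      have h2 : 0 ≤ η ^ 2 * ⟪y (k+1), v k⟫ ^ 2 * ‖y (k+1)‖ ^ 2 := by positivity
      linarith [ih hk']
  have hw0 : 0 < ‖v 0‖ ^ 2 := pow_pos (norm_pos_iff.mpr hv0) 2
  have hwn : 0 < ‖v (i - 1)‖ ^ 2 :=
    lt_of_lt_of_le hw0 (hmono (i - 1) (le_trans (Nat.sub_le i 1) hin))
  set w := v (i - 1) with hwdef
  set t := ⟪y i, w⟫ with ht
  have hvi : ‖v i‖ ^ 2 = ‖w‖ ^ 2 + 2 * η * t ^ 2 + η ^ 2 * t ^ 2 * ‖y i‖ ^ 2 := by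
    rw [hv i hi hin, oja_expand]
  have hwne : w ≠ 0 := by
    intro h
    rw [h] at hwn; simp at hwn
  have hwpos : 0 < ‖w‖ := norm_pos_iff.mpr hwne
  -- simplify LHS
  have hL : ⟪y i, ‖w‖⁻¹ • w⟫ ^ 2 = t ^ 2 / ‖w‖ ^ 2 := by
    rw [real_inner_smul_right, mul_pow, inv_pow, inv_mul_eq_div]
  set s := η * (t ^ 2 / ‖w‖ ^ 2) with hs
  have hs0 : 0 ≤ s := by
    have : (0:ℝ) ≤ t ^ 2 / ‖w‖ ^ 2 := by positivity
    exact mul_nonneg (le_of_lt hη) this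
  -- Cauchy-Schwarz: t^2 ≤ ‖y i‖^2 * ‖w‖^2
  have hcs : t ^ 2 ≤ ‖y i‖ ^ 2 * ‖w‖ ^ 2 := by
    have := abs_real_inner_le_norm (y i) w
    calc t ^ 2 = |t| ^ 2 := (sq_abs t).symm
    _ ≤ (‖y i‖ * ‖w‖) ^ 2 := by
        apply pow_le_pow_left₀ (abs_nonneg t) this
    _ = ‖y i‖ ^ 2 * ‖w‖ ^ 2 := by ring
  have hs01 : s ≤ 0.1 := by
    have h1 : t ^ 2 / ‖w‖ ^ 2 ≤ ‖y i‖ ^ 2 := by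
      rw [div_le_iff₀ hwn]; linarith
    calc s ≤ η * ‖y i‖ ^ 2 := by
            apply mul_le_mul_of_nonneg_left h1 (le_of_lt hη)
    _ ≤ η * M := mul_le_mul_of_nonneg_left hMy (le_of_lt hη)
    _ ≤ 0.1 := hηM
  -- ratio bound
  have hR : 1 + 2 * s ≤ ‖v i‖ ^ 2 / ‖w‖ ^ 2 := by
    rw [hvi]
    have h2 : 0 ≤ η ^ 2 * t ^ 2 * ‖y i‖ ^ 2 := by positivity
    rw [le_div_iff₀ hwn]
    have : s * ‖w‖ ^ 2 = η * t ^ 2 := by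
      rw [hs, mul_assoc, div_mul_cancel₀ _ hwn.ne']
    nlinarith
  have hRpos : 0 < 1 + 2 * s := by linarith
  have hlog1 : Real.log (1 + 2 * s) ≤ Real.log (‖v i‖ ^ 2 / ‖w‖ ^ 2) :=
    Real.log_le_log hRpos hR
  have hlog2 : 2 * s / (1 + 2 * s) ≤ Real.log (1 + 2 * s) := by
    have := log_one_add_ge (2 * s) (by linarith)
    linarith
  have hfinal : s ≤ 2 * s / (1 + 2 * s) := by
    rw [le_div_iff₀ hRpos]
    nlinarith
  calc η * ⟪y i, ‖w‖⁻¹ • w⟫ ^ 2 = s := by rw [hL]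
  _ ≤ 2 * s / (1 + 2 * s) := hfinal
  _ ≤ Real.log (1 + 2 * s) := hlog2
  _ ≤ Real.log (‖v i‖ ^ 2 / ‖w‖ ^ 2) := hlog1
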